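/- arXiv:1701.01204 — 2 statements merged into one kernel-verified Lean document; each statement's English description precedes it below -/
import Mathlib

section
/- Let g : [0,T] → R be differentiable and satisfy g'(t) = -g(t)² + K² with g(0) ≥ 0, where K ≥ 1 and T ≥ 1. Then for all t ∈ [T/2, T], g(t) ≤ K·(1 + 2/(e^T - 1)). -/
open Set intervalIntegral

/-- Uniform bound for the Riccati ODE: if `g` is differentiable on `[0,T]` with
`g' = -g² + K²`, `g 0 ≥ 0`, `K ≥ 1`, `T ≥ 1`, then
`g t ≤ K·(1 + 2/(e^T - 1))` for all `t ∈ [T/2, T]`. -/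
theorem riccati_ode_uniform_bound (g : ℝ → ℝ) (K T : ℝ) (hK : 1 ≤ K) (hT : 1 ≤ T)
    (hg0 : 0 ≤ g 0)
    (hderiv : ∀ t ∈ Set.Icc (0 : ℝ) T, HasDerivAt g (-(g t) ^ 2 + K ^ 2) t) :
    ∀ t ∈ Set.Icc (T / 2) T, g t ≤ K * (1 + 2 / (Real.exp T - 1)) := by
  have hK0 : (0:ℝ) < K := lt_of_lt_of_le one_pos hK
  have hT0 : (0:ℝ) < T := lt_of_lt_of_le one_pos hT
  set a := g 0 with ha
  have ha1 : (0:ℝ) < a + 1 := by linarith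
  set c : ℝ := 1 + 2 * K / (a + 1) with hc
  have hc1 : 1 < c := by
    have : 0 < 2 * K / (a + 1) := by positivity
    simp only [hc]; linarith
  -- denominator D t = c * exp (2Kt) - 1
  set D : ℝ → ℝ := fun t => c * Real.exp (2 * K * t) - 1 with hD
  have hDpos : ∀ t : ℝ, 0 ≤ t → 0 < D t := by
    intro t ht
    have h1 : (1:ℝ) ≤ Real.exp (2 * K * t) := Real.one_le_exp (by positivity)
    simp only [hD]
    nlinarith
  set h : ℝ → ℝ := fun t => K + 2 * K / D t with hh
  -- h solves the same ODE on [0, T]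
  have hDderiv : ∀ t : ℝ, HasDerivAt D (2 * K * (c * Real.exp (2 * K * t))) t := by
    intro t
    have h1 : HasDerivAt (fun t : ℝ => 2 * K * t) (2 * K) t := by
      simpa using (hasDerivAt_id t).const_mul (2 * K)
    have h2 : HasDerivAt (fun t : ℝ => Real.exp (2 * K * t))
        (Real.exp (2 * K * t) * (2 * K)) t := (Real.hasDerivAt_exp _).comp t h1
    have := ((h2.const_mul c).sub_const 1)
    refine this.congr_deriv (Eq.symm ?_); ring
  have hhderiv : ∀ t : ℝ, 0 ≤ t → HasDerivAt h (-(h t) ^ 2 + K ^ 2) t := by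
    intro t ht
    have hDne : D t ≠ 0 := (hDpos t ht).ne'
    have h1 : HasDerivAt (fun s => 2 * K / D s)
        ((0 * D t - 2 * K * (2 * K * (c * Real.exp (2 * K * t)))) / (D t) ^ 2) t :=
      (hasDerivAt_const t (2 * K)).div (hDderiv t) hDne
    have h2 := h1.const_add K
    have key : ∀ x : ℝ, x ≠ 0 →
        -(K + 2 * K / x) ^ 2 + K ^ 2 = (0 * x - 2 * K * (2 * K * (x + 1))) / x ^ 2 := by
      intro x hx; field_simp; ring
    refine h2.congr_deriv (Eq.symm ?_)
    have hE : c * Real.exp (2 * K * t) = D t + 1 := by simp [hD]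
    simp only [hh]
    rw [hE]
    exact key (D t) hDne
  have hh0 : h 0 = K + (a + 1) := by
    have : D 0 = 2 * K / (a + 1) := by simp [hD, hc]
    have h2K : (2 * K) ≠ 0 := by positivity
    rw [hh]; simp only [this, div_div_eq_mul_div]
    rw [mul_comm (2*K) (a+1), mul_div_assoc, div_self h2K, mul_one]
  -- continuity facts on [0, T]
  have hgc : ContinuousOn g (Icc 0 T) := fun x hx => ((hderiv x hx).continuousAt).continuousWithinAt
  have hhc : ∀ x ∈ Icc (0:ℝ) T, ContinuousAt h x := fun x hx => ((hhderiv x hx.1).continuousAt)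
  have hhcOn : ContinuousOn h (Icc 0 T) := fun x hx => (hhc x hx).continuousWithinAt
  set u : ℝ → ℝ := fun t => g t + h t with hu
  have hucOn : ContinuousOn u (Icc 0 T) := hgc.add hhcOn
  set F : ℝ → ℝ := fun t => ∫ s in (0:ℝ)..t, u s with hF
  -- F is continuous on [0,T]
  have huIcc : uIcc (0:ℝ) T = Icc 0 T := uIcc_of_le hT0.le
  have hFc : ContinuousOn F (Icc 0 T) := by
    rw [← huIcc]
    exact continuousOn_primitive_interval (by rw [huIcc]; exact hucOn.integrableOn_Icc)
  -- right derivative of F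
  have hFderiv : ∀ x ∈ Ico (0:ℝ) T, HasDerivWithinAt F (u x) (Ici x) x := by
    intro x hx
    have hint : IntervalIntegrable u MeasureTheory.volume 0 x := by
      apply ContinuousOn.intervalIntegrable
      rw [uIcc_of_le hx.1]
      exact hucOn.mono (Icc_subset_Icc le_rfl hx.2.le)
    have hmem : Icc (0:ℝ) T ∈ nhdsWithin x (Ioi x) := by
      apply mem_nhdsWithin.2
      exact ⟨Iio T, isOpen_Iio, hx.2, fun y hy => ⟨le_of_lt (lt_of_le_of_lt hx.1 hy.2),
        le_of_lt hy.1⟩⟩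
    have hmeas : StronglyMeasurableAtFilter u (nhdsWithin x (Ioi x)) MeasureTheory.volume :=
      ⟨Icc 0 T, hmem, hucOn.aestronglyMeasurable measurableSet_Icc⟩
    have hcont : ContinuousWithinAt u (Ioi x) x :=
      (((hderiv x ⟨hx.1, hx.2.le⟩).continuousAt.add (hhc x ⟨hx.1, hx.2.le⟩)) :
        ContinuousAt u x).continuousWithinAt
    exact integral_hasDerivWithinAt_right hint hmeas hcont
  -- the difference d = g - h, and φ = d * exp F is constant
  set d : ℝ → ℝ := fun t => g t - h t with hd
  set φ : ℝ → ℝ := fun t => d t * Real.exp (F t) with hφ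
  have hφc : ContinuousOn φ (Icc 0 T) :=
    ((hgc.sub hhcOn).mul (Real.continuous_exp.comp_continuousOn hFc))
  have hφderiv : ∀ x ∈ Ico (0:ℝ) T, HasDerivWithinAt φ 0 (Ici x) x := by
    intro x hx
    have hxI : x ∈ Icc (0:ℝ) T := ⟨hx.1, hx.2.le⟩
    have hdd : HasDerivWithinAt d (-(u x) * d x) (Ici x) x := by
      have := ((hderiv x hxI).sub (hhderiv x hx.1)).hasDerivWithinAt (s := Ici x)
      refine this.congr_deriv (Eq.symm ?_)
      simp only [hd, hu]; ring
    have hexp : HasDerivWithinAt (fun t => Real.exp (F t)) (Real.exp (F x) * u x) (Ici x) x :=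
      (Real.hasDerivAt_exp (F x)).comp_hasDerivWithinAt x (hFderiv x hx)
    have := hdd.mul hexp
    refine this.congr_deriv (Eq.symm ?_)
    ring
  have hconst : ∀ x ∈ Icc (0:ℝ) T, φ x = φ 0 :=
    constant_of_has_deriv_right_zero hφc hφderiv
  have hF0 : F 0 = 0 := by simp [hF]
  have hφ0 : φ 0 = a - (K + (a + 1)) := by
    simp [hφ, hF0, hd, hh0, ha]
  have hφ0neg : φ 0 ≤ 0 := by rw [hφ0]; linarith
  -- hence g ≤ h on [0, T]
  have hgh : ∀ x ∈ Icc (0:ℝ) T, g x ≤ h x := by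
    intro x hx
    have h1 : φ x ≤ 0 := (hconst x hx).le.trans hφ0neg
    have h2 : 0 < Real.exp (F x) := Real.exp_pos _
    have : d x ≤ 0 := by
      by_contra hcon
      push_neg at hcon
      exact absurd h1 (not_le.2 (mul_pos hcon h2))
    simpa [hd, sub_nonpos] using this
  -- final bound
  intro t ht
  have ht0 : 0 ≤ t := le_trans (by positivity) ht.1
  have htI : t ∈ Icc (0:ℝ) T := ⟨ht0, ht.2⟩
  have hET : (0:ℝ) < Real.exp T - 1 := by
    have : Real.exp 0 < Real.exp T := Real.exp_lt_exp.2 hT0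
    simpa [Real.exp_zero] using sub_pos.2 this
  have hDbig : Real.exp T - 1 ≤ D t := by
    have h1 : Real.exp T ≤ Real.exp (2 * K * t) := by
      apply Real.exp_le_exp.2
      have : T / 2 ≤ t := ht.1
      nlinarith
    have h2 : Real.exp (2 * K * t) ≤ c * Real.exp (2 * K * t) := by
      nlinarith [Real.exp_pos (2 * K * t)]
    simp only [hD]; linarith
  have hbound : h t ≤ K + 2 * K / (Real.exp T - 1) := by
    have : 2 * K / D t ≤ 2 * K / (Real.exp T - 1) :=
      div_le_div_of_nonneg_left (by positivity) hET hDbig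
    simp only [hh]; linarith
  have : g t ≤ K + 2 * K / (Real.exp T - 1) := (hgh t htI).trans hbound
  have heq : K * (1 + 2 / (Real.exp T - 1)) = K + 2 * K / (Real.exp T - 1) := by
    field_simp
  rw [heq]; exact this
end

section
/- If h : [0,∞) → [0,∞) satisfies h'(t) ≤ -h(t)² + K² on [0,T] with K ≥ 1 and T ≥ 1, then sup_{t ∈ [T/2,T]} h(t) ≤ K·(1 + 2/(e^T - 1)), a bound independent of the initial value h(0) ≥ 0. -/
/-- If `h : [0,∞) → [0,∞)` satisfies the Riccati differential inequality
`h' ≤ -h² + K²` on `[0,T]` with `K ≥ 1` and `T ≥ 1`, then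
`sup_{t ∈ [T/2,T]} h t ≤ K·(1 + 2/(e^T - 1))`, uniformly in `h 0 ≥ 0`. -/
theorem riccati_inequality_uniform_bound (h h' : ℝ → ℝ) (K T : ℝ) (hK : 1 ≤ K) (hT : 1 ≤ T)
    (hnn : ∀ t : ℝ, 0 ≤ t → 0 ≤ h t)
    (hderiv : ∀ t ∈ Set.Icc (0 : ℝ) T, HasDerivAt h (h' t) t)
    (hineq : ∀ t ∈ Set.Icc (0 : ℝ) T, h' t ≤ -(h t) ^ 2 + K ^ 2) :
    ∀ t ∈ Set.Icc (T / 2) T, h t ≤ K * (1 + 2 / (Real.exp T - 1)) := by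
  intro t ht
  obtain ⟨ht1, ht2⟩ := ht
  have hT0 : (0:ℝ) < T := lt_of_lt_of_le one_pos hT
  have ht0 : (0:ℝ) < t := lt_of_lt_of_le (by linarith) ht1
  have hK0 : (0:ℝ) < K := lt_of_lt_of_le one_pos hK
  have heT : (1:ℝ) < Real.exp T := by
    calc (1:ℝ) = Real.exp 0 := (Real.exp_zero).symm
    _ < Real.exp T := Real.exp_lt_exp.2 hT0
  have hE : (0:ℝ) < Real.exp T - 1 := by linarith
  set B := K * (1 + 2 / (Real.exp T - 1)) with hB
  have hKB : K < B := by
    have h2 : 0 < 2 / (Real.exp T - 1) := by positivity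
    nlinarith
  have hcontOn : ContinuousOn h (Set.Icc 0 T) := fun x hx =>
    (hderiv x hx).continuousAt.continuousWithinAt
  have hsub : Set.Icc (0:ℝ) t ⊆ Set.Icc 0 T := Set.Icc_subset_Icc le_rfl ht2
  by_cases hc : ∀ r ∈ Set.Icc (0:ℝ) t, K < h r
  · -- h stays above K on [0,t]: use the explicit Riccati comparison
    set F : ℝ → ℝ := fun r => ((h r - K)⁻¹ + 1/(2*K)) * Real.exp (-(2*K)*r) with hF
    have hFd : ∀ x ∈ Set.Icc (0:ℝ) t,
        HasDerivAt F ((-h' x / (h x - K)^2) * Real.exp (-(2*K)*x)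
          + ((h x - K)⁻¹ + 1/(2*K)) * (Real.exp (-(2*K)*x) * (-(2*K)))) x := by
      intro x hx
      have hne : h x - K ≠ 0 := by
        have := hc x hx
        intro hz; rw [sub_eq_zero] at hz; exact absurd hz.symm (ne_of_lt this)
      have h1 : HasDerivAt (fun r => h r - K) (h' x) x :=
        (hderiv x (hsub hx)).sub_const K
      have h2 : HasDerivAt (fun r => (h r - K)⁻¹) (-h' x / (h x - K)^2) x := h1.inv hne
      have h3 : HasDerivAt (fun r => (h r - K)⁻¹ + 1/(2*K)) (-h' x / (h x - K)^2) x :=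
        h2.add_const _
      have h4 : HasDerivAt (fun r : ℝ => Real.exp (-(2*K)*r))
          (Real.exp (-(2*K)*x) * (-(2*K))) x := by
        have := ((hasDerivAt_id x).const_mul (-(2*K))).exp
        simpa [mul_comm] using this
      exact h3.mul h4
    have hmono : MonotoneOn F (Set.Icc 0 t) := by
      apply monotoneOn_of_deriv_nonneg (convex_Icc 0 t)
      · exact fun x hx => (hFd x hx).continuousAt.continuousWithinAt
      · intro x hx
        rw [interior_Icc] at hx
        exact (hFd x (Set.Ioo_subset_Icc_self hx)).differentiableAt.differentiableWithinAt
      · intro x hx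
        rw [interior_Icc] at hx
        have hx' : x ∈ Set.Icc (0:ℝ) t := Set.Ioo_subset_Icc_self hx
        rw [(hFd x hx').deriv]
        have hu : 0 < h x - K := sub_pos.2 (hc x hx')
        have he : 0 < Real.exp (-(2*K)*x) := Real.exp_pos _
        have hkey : (h x - K)^2 + 2*K*(h x - K) ≤ -h' x := by
          have := hineq x (hsub hx'); nlinarith
        have heq : (-h' x / (h x - K)^2) * Real.exp (-(2*K)*x)
            + ((h x - K)⁻¹ + 1/(2*K)) * (Real.exp (-(2*K)*x) * (-(2*K)))
            = ((-h' x) - 2*K*(h x - K) - (h x - K)^2) / (h x - K)^2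
              * Real.exp (-(2*K)*x) := by
          field_simp
          ring
        rw [heq]
        apply mul_nonneg _ he.le
        apply div_nonneg (by linarith) (sq_nonneg _)
    have hmem0 : (0:ℝ) ∈ Set.Icc (0:ℝ) t := ⟨le_rfl, ht0.le⟩
    have hmemt : t ∈ Set.Icc (0:ℝ) t := ⟨ht0.le, le_rfl⟩
    have hF0t : F 0 ≤ F t := hmono hmem0 hmemt ht0.le
    have hu0 : 0 < h 0 - K := sub_pos.2 (hc 0 hmem0)
    have hut : 0 < h t - K := sub_pos.2 (hc t hmemt)
    have hw0 : 0 < (h 0 - K)⁻¹ := inv_pos.2 hu0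
    have hwt : 0 < (h t - K)⁻¹ := inv_pos.2 hut
    have hF0 : F 0 = (h 0 - K)⁻¹ + 1/(2*K) := by simp [hF]
    -- from monotonicity: 1/(2K) ≤ ((h t - K)⁻¹ + 1/(2K)) * exp(-2Kt)
    have step1 : 1/(2*K) ≤ ((h t - K)⁻¹ + 1/(2*K)) * Real.exp (-(2*K)*t) := by
      rw [hF0] at hF0t
      calc 1/(2*K) ≤ (h 0 - K)⁻¹ + 1/(2*K) := by linarith
      _ ≤ _ := hF0t
    have hexp : Real.exp (-(2*K)*t) = (Real.exp (2*K*t))⁻¹ := by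
      rw [← Real.exp_neg]; ring_nf
    have hEt : 0 < Real.exp (2*K*t) := Real.exp_pos _
    have step2 : (Real.exp (2*K*t) - 1) / (2*K) ≤ (h t - K)⁻¹ := by
      rw [hexp, ← div_eq_mul_inv, le_div_iff₀ hEt] at step1
      rw [div_le_iff₀ (by positivity : (0:ℝ) < 2*K)]
      have h1 : 1/(2*K) * Real.exp (2*K*t) * (2*K) ≤ ((h t - K)⁻¹ + 1/(2*K)) * (2*K) :=
        mul_le_mul_of_nonneg_right step1 (by positivity)
      have h2 : 1/(2*K) * Real.exp (2*K*t) * (2*K) = Real.exp (2*K*t) := by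
        field_simp
      have h3 : ((h t - K)⁻¹ + 1/(2*K)) * (2*K) = (h t - K)⁻¹ * (2*K) + 1 := by
        field_simp
      linarith
    have hTE : Real.exp T ≤ Real.exp (2*K*t) := by
      apply Real.exp_le_exp.2
      nlinarith
    have step3 : (Real.exp T - 1) / (2*K) ≤ (h t - K)⁻¹ := by
      refine le_trans ?_ step2
      gcongr
    have step4 : h t - K ≤ 2*K / (Real.exp T - 1) := by
      have h1 : 0 < (Real.exp T - 1) / (2*K) := by positivity
      have h2 : (Real.exp T - 1) / (2*K) * (h t - K) ≤ 1 := by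
        calc (Real.exp T - 1) / (2*K) * (h t - K) ≤ (h t - K)⁻¹ * (h t - K) :=
          mul_le_mul_of_nonneg_right step3 hut.le
        _ = 1 := inv_mul_cancel₀ (ne_of_gt hut)
      rw [div_mul_eq_mul_div, div_le_one (by positivity)] at h2
      rw [le_div_iff₀ hE]
      linarith [h2]
    have : B = K + 2*K / (Real.exp T - 1) := by
      rw [hB]; field_simp
    linarith [step4, this.ge]
  · -- h dips below K at some point r ≤ t, and then can never exceed B again
    push_neg at hc
    obtain ⟨r, hr, hrK⟩ := hc
    by_contra hcon
    push_neg at hcon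
    set S := {x ∈ Set.Icc r t | h x ≤ B} with hS
    have hrS : r ∈ S := ⟨⟨le_rfl, hr.2⟩, le_trans hrK hKB.le⟩
    have hSne : S.Nonempty := ⟨r, hrS⟩
    have hSbdd : BddAbove S := ⟨t, fun x hx => hx.1.2⟩
    have hScl : IsClosed S := by
      have hcont' : ContinuousOn h (Set.Icc r t) :=
        hcontOn.mono (Set.Icc_subset_Icc hr.1 ht2)
      exact hcont'.preimage_isClosed_of_isClosed isClosed_Icc isClosed_Iic
    set s := sSup S with hs
    have hsS : s ∈ S := hScl.csSup_mem hSne hSbdd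
    have hst : s ≤ t := csSup_le hSne (fun x hx => hx.1.2)
    have hsB : h s ≤ B := hsS.2
    have hslt : s < t := lt_of_le_of_ne hst (fun he => by rw [he] at hsB; linarith)
    have hkey : ∀ x ∈ Set.Ioo s t, B < h x := by
      intro x hx
      by_contra hxB
      push_neg at hxB
      have hxS : x ∈ S := ⟨⟨le_trans hsS.1.1 hx.1.le, hx.2.le⟩, hxB⟩
      exact absurd (le_csSup hSbdd hxS) (not_le.2 hx.1)
    have hIcc : Set.Icc s t ⊆ Set.Icc (0:ℝ) T :=
      Set.Icc_subset_Icc (le_trans hr.1 hsS.1.1) ht2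
    have hanti : AntitoneOn h (Set.Icc s t) := by
      apply antitoneOn_of_deriv_nonpos (convex_Icc s t) (hcontOn.mono hIcc)
      · intro x hx
        rw [interior_Icc] at hx
        exact (hderiv x (hIcc (Set.Ioo_subset_Icc_self hx))).differentiableAt.differentiableWithinAt
      · intro x hx
        rw [interior_Icc] at hx
        have hx' : x ∈ Set.Icc (0:ℝ) T := hIcc (Set.Ioo_subset_Icc_self hx)
        rw [(hderiv x hx').deriv]
        have hBx : B < h x := hkey x hx
        have := hineq x hx'
        nlinarith
    have : h t ≤ h s := hanti ⟨le_rfl, hslt.le⟩ ⟨hslt.le, le_rfl⟩ hslt.le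
    linarith
end
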